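/- Let $f \in \mathbb{Q}[x]$, $u \in \mathbb{Q}$, and let $m_1, m_2, m_3 \geq 3$ be odd integers with $M = \mathrm{lcm}(m_1, m_2, m_3)$ and $M_i = M/m_i$. Suppose $p, q, r \in \mathbb{Q}$ and nonzero $v_1, v_2, v_3 \in \mathbb{Q}$ satisfy $\frac{p^2 - a f(u)}{v_1^{2m_1}} = \frac{q^2 - b f(u)}{v_2^{2m_2}} = \frac{r^2 - c f(u)}{v_3^{2m_3}} =: T \neq 0$. Define $x_i = v_i^2 T^{M_i}$ for $i = 1,2,3$, $x_4 = u$, $y_i = (p,q,r)_i \cdot T^{(M-1)/2}$ for $i=1,2,3$, and $y_4 = T^{-(M-1)/2}$. Then $\frac{y_1^2 - x_1^{m_1}}{a} = \frac{y_2^2 - x_2^{m_2}}{b} = \frac{y_3^2 - x_3^{m_3}}{c} = \frac{f(x_4)}{y_4^2}$. -/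
import Mathlib


theorem parametric_solution_system_two (f : Polynomial ℚ) (u : ℚ)
    (a b c : ℚ) (ha : a ≠ 0) (hb : b ≠ 0) (hc : c ≠ 0)
    (m1 m2 m3 : ℕ) (hm1 : 3 ≤ m1) (hm2 : 3 ≤ m2) (hm3 : 3 ≤ m3)
    (ho1 : Odd m1) (ho2 : Odd m2) (ho3 : Odd m3)
    (p q r v1 v2 v3 T : ℚ) (hv1 : v1 ≠ 0) (hv2 : v2 ≠ 0) (hv3 : v3 ≠ 0)
    (hT : T ≠ 0)
    (h1 : (p ^ 2 - a * f.eval u) / v1 ^ (2 * m1) = T)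
    (h2 : (q ^ 2 - b * f.eval u) / v2 ^ (2 * m2) = T)
    (h3 : (r ^ 2 - c * f.eval u) / v3 ^ (2 * m3) = T) :
    let M := Nat.lcm m1 (Nat.lcm m2 m3)
    let M1 := M / m1
    let M2 := M / m2
    let M3 := M / m3
    let x1 := v1 ^ 2 * T ^ M1
    let x2 := v2 ^ 2 * T ^ M2
    let x3 := v3 ^ 2 * T ^ M3
    let x4 := u
    let y1 := p * T ^ ((M - 1) / 2)
    let y2 := q * T ^ ((M - 1) / 2)
    let y3 := r * T ^ ((M - 1) / 2)
    let y4 := (T ^ ((M - 1) / 2))⁻¹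
    ((y1 ^ 2 - x1 ^ m1) / a = (y2 ^ 2 - x2 ^ m2) / b) ∧
    ((y2 ^ 2 - x2 ^ m2) / b = (y3 ^ 2 - x3 ^ m3) / c) ∧
    ((y3 ^ 2 - x3 ^ m3) / c = f.eval x4 / y4 ^ 2) := by
  intro M M1 M2 M3 x1 x2 x3 x4 y1 y2 y3 y4
  have hd1 : m1 ∣ M := Nat.dvd_lcm_left _ _
  have hd2 : m2 ∣ M := (Nat.dvd_lcm_left _ _).trans (Nat.dvd_lcm_right _ _)
  have hd3 : m3 ∣ M := (Nat.dvd_lcm_right _ _).trans (Nat.dvd_lcm_right _ _)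
  have hM1 : M1 * m1 = M := Nat.div_mul_cancel hd1
  have hM2 : M2 * m2 = M := Nat.div_mul_cancel hd2
  have hM3 : M3 * m3 = M := Nat.div_mul_cancel hd3
  have hModd : ¬ 2 ∣ M := by
    intro h
    have hmul : M ∣ m1 * Nat.lcm m2 m3 := Nat.lcm_dvd_mul _ _
    have hmul2 : Nat.lcm m2 m3 ∣ m2 * m3 := Nat.lcm_dvd_mul _ _
    rcases (Nat.Prime.dvd_mul Nat.prime_two).mp (h.trans hmul) with h' | h'
    · exact (Nat.not_even_iff_odd.mpr ho1) (even_iff_two_dvd.mpr h')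
    · rcases (Nat.Prime.dvd_mul Nat.prime_two).mp (h'.trans hmul2) with h'' | h''
      · exact (Nat.not_even_iff_odd.mpr ho2) (even_iff_two_dvd.mpr h'')
      · exact (Nat.not_even_iff_odd.mpr ho3) (even_iff_two_dvd.mpr h'')
  have hMmod : M % 2 = 1 := Nat.two_dvd_ne_zero.mp hModd
  set k : ℕ := (M - 1) / 2 with hkdef
  have hMk : M = 2 * k + 1 := by omega
  rw [div_eq_iff (pow_ne_zero _ hv1)] at h1
  rw [div_eq_iff (pow_ne_zero _ hv2)] at h2
  rw [div_eq_iff (pow_ne_zero _ hv3)] at h3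
  have hx1 : x1 ^ m1 = v1 ^ (2 * m1) * (T ^ (2 * k) * T) := by
    show (v1 ^ 2 * T ^ M1) ^ m1 = _
    rw [mul_pow, ← pow_mul, ← pow_mul, hM1, hMk, pow_succ]
  have hx2 : x2 ^ m2 = v2 ^ (2 * m2) * (T ^ (2 * k) * T) := by
    show (v2 ^ 2 * T ^ M2) ^ m2 = _
    rw [mul_pow, ← pow_mul, ← pow_mul, hM2, hMk, pow_succ]
  have hx3 : x3 ^ m3 = v3 ^ (2 * m3) * (T ^ (2 * k) * T) := by
    show (v3 ^ 2 * T ^ M3) ^ m3 = _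
    rw [mul_pow, ← pow_mul, ← pow_mul, hM3, hMk, pow_succ]
  have hy1 : y1 ^ 2 = p ^ 2 * T ^ (2 * k) := by
    show (p * T ^ k) ^ 2 = _
    rw [mul_pow, ← pow_mul, mul_comm k 2]
  have hy2 : y2 ^ 2 = q ^ 2 * T ^ (2 * k) := by
    show (q * T ^ k) ^ 2 = _
    rw [mul_pow, ← pow_mul, mul_comm k 2]
  have hy3 : y3 ^ 2 = r ^ 2 * T ^ (2 * k) := by
    show (r * T ^ k) ^ 2 = _
    rw [mul_pow, ← pow_mul, mul_comm k 2]
  have E1 : (y1 ^ 2 - x1 ^ m1) / a = f.eval u * T ^ (2 * k) := by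
    rw [hy1, hx1, div_eq_iff ha]
    linear_combination T ^ (2 * k) * h1
  have E2 : (y2 ^ 2 - x2 ^ m2) / b = f.eval u * T ^ (2 * k) := by
    rw [hy2, hx2, div_eq_iff hb]
    linear_combination T ^ (2 * k) * h2
  have E3 : (y3 ^ 2 - x3 ^ m3) / c = f.eval u * T ^ (2 * k) := by
    rw [hy3, hx3, div_eq_iff hc]
    linear_combination T ^ (2 * k) * h3
  have E4 : f.eval x4 / y4 ^ 2 = f.eval u * T ^ (2 * k) := by
    show f.eval u / ((T ^ k)⁻¹) ^ 2 = _
    rw [inv_pow, ← pow_mul, mul_comm k 2, div_eq_mul_inv, inv_inv]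
  exact ⟨E1.trans E2.symm, E2.trans E3.symm, E3.trans E4.symm⟩
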